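/- With the notation of the previous setting (distinct $z_1,\dots,z_S$, weights $q_j$, $G(z_j)=(z_jE-A)^{-1}B$, $Q(z)=\sum_j q_j/(z-z_j)$, barycentric surrogate $\widetilde{G}$), define the relative residual norm $\rho(\widetilde{G},z)=\|(zE-A)\widetilde{G}(z)-B\|_F/\|B\|_F$ where $B\neq 0$. Then there exists a constant $\gamma\ge 0$, independent of $z$, namely $\gamma=\|\sum_{j=1}^S q_jEG(z_j)\|_F/\|B\|_F$, such that $\rho(\widetilde{G},z)=\gamma\,|Q(z)|^{-1}$ for all $z\notin\{z_1,\dots,z_S\}$ with $Q(z)\neq 0$. -/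
import Mathlib


/-- The Frobenius norm of a complex matrix. -/
noncomputable def frob {a b : ℕ} (M : Matrix (Fin a) (Fin b) ℂ) : ℝ :=
  Real.sqrt (∑ i, ∑ j, ‖M i j‖ ^ 2)

lemma frob_smul {a b : ℕ} (c : ℂ) (M : Matrix (Fin a) (Fin b) ℂ) :
    frob (c • M) = ‖c‖ * frob M := by
  unfold frob
  rw [← Real.sqrt_sq (norm_nonneg c), ← Real.sqrt_mul (sq_nonneg _)]
  congr 1
  simp [Matrix.smul_apply, norm_mul, mul_pow, Finset.mul_sum]

/-- The relative residual norm of the barycentric state surrogate equals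
a `z`-independent constant `γ` times `|Q(z)|⁻¹`. -/
theorem relative_residual_eq_gamma_mul_inv_absQ
    {n m S : ℕ}
    (E A : Matrix (Fin n) (Fin n) ℂ) (B : Matrix (Fin n) (Fin m) ℂ)
    (hB : B ≠ 0)
    (z : Fin S → ℂ) (hz : Function.Injective z)
    (hinv : ∀ j, IsUnit (z j • E - A))
    (q : Fin S → ℂ)
    (G : Fin S → Matrix (Fin n) (Fin m) ℂ)
    (hG : ∀ j, G j = (z j • E - A)⁻¹ * B)
    (Q : ℂ → ℂ) (hQ : ∀ w, Q w = ∑ j, q j / (w - z j))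
    (Gt : ℂ → Matrix (Fin n) (Fin m) ℂ)
    (hGt : ∀ w, Gt w = (Q w)⁻¹ • ∑ j, (q j / (w - z j)) • G j)
    (ρ : ℂ → ℝ) (hρ : ∀ w, ρ w = frob ((w • E - A) * Gt w - B) / frob B)
    (γ : ℝ) (hγ : γ = frob (∑ j, q j • (E * G j)) / frob B) :
    0 ≤ γ ∧ ∀ w : ℂ, w ∉ Set.range z → Q w ≠ 0 → ρ w = γ * ‖Q w‖⁻¹ := by
  constructor
  · rw [hγ]
    exact div_nonneg (Real.sqrt_nonneg _) (Real.sqrt_nonneg _)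
  · intro w hw hQw
    have hwz : ∀ j, w - z j ≠ 0 := by
      intro j h
      exact hw ⟨j, (sub_eq_zero.mp h).symm⟩
    have key : ∀ j, (w • E - A) * G j = B + (w - z j) • (E * G j) := by
      intro j
      have h1 : (z j • E - A) * G j = B := by
        rw [hG, ← Matrix.mul_assoc,
          Matrix.mul_nonsing_inv _ ((Matrix.isUnit_iff_isUnit_det _).mp (hinv j)), Matrix.one_mul]
      have h2 : w • E - A = (z j • E - A) + (w - z j) • E := by
        module
      rw [h2, Matrix.add_mul, h1, Matrix.smul_mul]
    have hres : (w • E - A) * Gt w - B = (Q w)⁻¹ • ∑ j, q j • (E * G j) := by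
      rw [hGt, Matrix.mul_smul, Matrix.mul_sum]
      have : ∀ j ∈ Finset.univ, (w • E - A) * ((q j / (w - z j)) • G j)
          = (q j / (w - z j)) • B + q j • (E * G j) := by
        intro j _
        rw [Matrix.mul_smul, key j, smul_add, smul_smul, div_mul_cancel₀ _ (hwz j)]
      rw [Finset.sum_congr rfl this, Finset.sum_add_distrib, ← Finset.sum_smul, ← hQ,
        smul_add, inv_smul_smul₀ hQw]
      abel
    rw [hρ, hres, frob_smul, norm_inv, hγ]
    ring
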